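/- Let B be a torsion-free group containing no subgroup isomorphic to Z², let φ ∈ Aut(B), and let G = B ⋊ Z. Then Z acts freely by conjugation on the set of conjugacy classes of nontrivial elements of B if and only if G contains no subgroup isomorphic to Z². -/

import Mathlib

/-- The semidirect product `B ⋊ ℤ` where `ℤ` acts via the automorphism `φ`. -/
abbrev SDP (B : Type*) [Group B] (φ : MulAut B) :=
  SemidirectProduct B (Multiplicative ℤ) (zpowersHom (MulAut B) φ)

open SemidirectProduct Multiplicative

section Aux

variable {B : Type*} [Group B] {φ : MulAut B}

lemma sdp_right_zpow (a : SDP B φ) (n : ℤ) : (a ^ n).right = a.right ^ n :=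
  map_zpow rightHom a n

lemma sdp_conj_inl (a : SDP B φ) (y : B) :
    a * inl y * a⁻¹ = inl (a.left * (φ ^ (toAdd a.right)) y * a.left⁻¹) := by
  ext
  · simp only [mul_left, mul_right, left_inl, right_inl, inv_left, inv_right,
      zpowersHom_apply, mul_one]
    rw [← MulAut.mul_apply, ← zpow_add, toAdd_inv, add_neg_cancel, zpow_zero,
      MulAut.one_apply, mul_assoc]
  · simp

lemma isConj_of_commute {a : SDP B φ} {y : B} (h : Commute a (inl y)) :
    IsConj ((φ ^ (toAdd a.right)) y) y := by
  have h0 := sdp_conj_inl a y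
  rw [h.eq, mul_assoc, mul_inv_cancel, mul_one] at h0
  have hl : a.left * (φ ^ (toAdd a.right)) y * a.left⁻¹ = y := by
    have := congrArg SemidirectProduct.left h0.symm
    simpa using this
  exact isConj_iff.2 ⟨a.left, hl⟩

/-- Two commuting, `ℤ²`-independent elements with the first having nontrivial
`ℤ`-part give a conjugacy relation. -/
lemma case_two (a b : SDP B φ)
    (hcomm : Commute a b)
    (indep : ∀ m n : ℤ, a ^ m * b ^ n = 1 → m = 0 ∧ n = 0)
    (hr : toAdd a.right ≠ 0) :
    ∃ y : B, y ≠ 1 ∧ IsConj ((φ ^ (toAdd a.right)) y) y := by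
  set r : ℤ := toAdd a.right with hr'
  set s : ℤ := toAdd b.right with hs'
  set c : SDP B φ := a ^ s * b ^ (-r) with hc
  have hcr : c.right = 1 := by
    have h1 : c.right = a.right ^ s * b.right ^ (-r) := by
      rw [hc, mul_right, sdp_right_zpow, sdp_right_zpow]
    rw [h1]
    apply toAdd.injective
    simp only [toAdd_mul, toAdd_zpow, ← hr', ← hs', toAdd_one, smul_eq_mul]
    ring
  have hcl : c = inl c.left := by
    ext
    · simp
    · simp [hcr]
  have hclne : c.left ≠ 1 := by
    intro h
    have hone : c = 1 := by rw [hcl, h, map_one]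
    obtain ⟨h1, h2⟩ := indep s (-r) (by rw [← hc]; exact hone)
    exact hr (by omega)
  refine ⟨c.left, hclne, ?_⟩
  have hac : Commute a c := ((Commute.refl a).zpow_right s).mul_right
    (hcomm.zpow_right (-r))
  rw [hcl] at hac
  exact isConj_of_commute hac

end Aux

/-- If `B` is torsion-free and contains no subgroup isomorphic to `ℤ²`, then
`ℤ` acts freely by conjugation on conjugacy classes of nontrivial elements of
`B` iff `G = B ⋊ ℤ` contains no subgroup isomorphic to `ℤ²`. -/
theorem stmt8 (B : Type*) [Group B] (φ : MulAut B)
    (htf : ∀ g : B, g ≠ 1 → ¬IsOfFinOrder g)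
    (hZ2 : ¬ ∃ H : Subgroup B, Nonempty (H ≃* Multiplicative (ℤ × ℤ))) :
    (∀ y : B, y ≠ 1 → ∀ r : ℤ, r ≠ 0 → ¬ IsConj ((φ ^ r) y) y) ↔
      ¬ ∃ H : Subgroup (SDP B φ), Nonempty (H ≃* Multiplicative (ℤ × ℤ)) := by
  constructor
  · rintro hfree ⟨H, ⟨e⟩⟩
    set u : H := e.symm (ofAdd (1, 0)) with hu
    set v : H := e.symm (ofAdd (0, 1)) with hv
    have indep : ∀ m n : ℤ, (u : SDP B φ) ^ m * (v : SDP B φ) ^ n = 1 → m = 0 ∧ n = 0 := by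
      intro m n h
      have h' : u ^ m * v ^ n = 1 := by
        apply Subtype.ext
        push_cast
        exact h
      have h2 := congrArg e h'
      rw [map_mul, map_zpow, map_zpow, hu, hv, e.apply_symm_apply,
        e.apply_symm_apply, map_one] at h2
      have h3 := congrArg toAdd h2
      simp only [toAdd_mul, toAdd_zpow, toAdd_ofAdd, toAdd_one, Prod.smul_mk,
        smul_eq_mul, mul_one, mul_zero, Prod.mk_add_mk, add_zero, zero_add] at h3
      exact ⟨by simpa using congrArg Prod.fst h3, by simpa using congrArg Prod.snd h3⟩
    have hcomm : Commute (u : SDP B φ) (v : SDP B φ) := by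
      have h : u * v = v * u := e.injective (by rw [map_mul, map_mul, mul_comm])
      simpa [Commute, SemiconjBy] using congrArg Subtype.val h
    by_cases hru : toAdd (u : SDP B φ).right = 0
    · by_cases hrv : toAdd (v : SDP B φ).right = 0
      · -- H sits inside B
        have hr1 : (u : SDP B φ).right = 1 := toAdd.injective (by simpa using hru)
        have hr2 : (v : SDP B φ).right = 1 := toAdd.injective (by simpa using hrv)
        have hker : ∀ h : H, (h : SDP B φ).right = 1 := by
          intro h
          obtain ⟨m, n, hrep⟩ : ∃ m n : ℤ, h = u ^ m * v ^ n := by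
            refine ⟨(toAdd (e h)).1, (toAdd (e h)).2, ?_⟩
            apply e.injective
            rw [map_mul, map_zpow, map_zpow, hu, hv, e.apply_symm_apply, e.apply_symm_apply]
            apply toAdd.injective
            simp [toAdd_mul, toAdd_zpow]
          have hco : (h : SDP B φ) = (u : SDP B φ) ^ m * (v : SDP B φ) ^ n := by
            have := congrArg (Subtype.val) hrep
            push_cast at this
            exact this
          rw [hco, mul_right, sdp_right_zpow, sdp_right_zpow, hr1, hr2,
            one_zpow, one_zpow, mul_one]
        refine hZ2 ⟨?_, ⟨?_⟩⟩
        · exact (MonoidHom.mk' (fun z => ((e.symm z : H) : SDP B φ).left) (by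
            intro z1 z2
            show ((e.symm (z1 * z2) : H) : SDP B φ).left = _
            rw [map_mul]
            push_cast
            rw [mul_left, hker (e.symm z1), zpowersHom_apply, toAdd_one, zpow_zero,
              MulAut.one_apply])).range
        · refine (MonoidHom.ofInjective ?_).symm
          rw [injective_iff_map_eq_one]
          intro z hz
          simp only [MonoidHom.mk'_apply] at hz
          have hzer : ((e.symm z : H) : SDP B φ) = 1 := by
            ext
            · simpa using hz
            · simpa using hker (e.symm z)
          have h1 : (e.symm z : H) = 1 := Subtype.ext (by simpa using hzer)
          have h2 := congrArg e h1
          rwa [e.apply_symm_apply, map_one] at h2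
      · obtain ⟨y, hy, hconj⟩ := case_two (φ := φ) (v : SDP B φ) (u : SDP B φ) hcomm.symm
          (fun m n h => (indep n m (by rw [← (hcomm.zpow_zpow n m).eq] at h; exact h)).symm.imp id id) hrv
        exact hfree y hy _ hrv hconj
    · obtain ⟨y, hy, hconj⟩ := case_two (φ := φ) (u : SDP B φ) (v : SDP B φ) hcomm indep hru
      exact hfree y hy _ hru hconj
  · intro hnZ2 y hy r hr hconj
    obtain ⟨x, hx⟩ := isConj_iff.1 hconj
    set g : SDP B φ := ⟨x, ofAdd r⟩ with hg
    set b : SDP B φ := inl y with hb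
    have hcomm : Commute g b := by
      have h0 := sdp_conj_inl g y
      have h2 : g * b * g⁻¹ = b := by
        rw [hb, h0]
        show inl (x * (φ ^ r) y * x⁻¹) = inl y
        rw [hx]
      have h3 : g * b * g⁻¹ * g = b * g := by rw [h2]
      rwa [inv_mul_cancel_right] at h3
    have inj : Function.Injective
        (MonoidHom.mk' (fun z : Multiplicative (ℤ × ℤ) => g ^ (toAdd z).1 * b ^ (toAdd z).2) (by
          intro z1 z2
          simp only [toAdd_mul, Prod.fst_add, Prod.snd_add, zpow_add]
          rw [mul_assoc, ← mul_assoc (g ^ (toAdd z2).1),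
            (hcomm.zpow_zpow (toAdd z2).1 (toAdd z1).2).eq]
          group)) := by
      rw [injective_iff_map_eq_one]
      intro z hz
      simp only [MonoidHom.mk'_apply] at hz
      have hright := congrArg SemidirectProduct.right hz
      rw [mul_right, one_right, sdp_right_zpow, sdp_right_zpow] at hright
      have hbr : b.right = 1 := rfl
      have hgr : g.right = ofAdd r := rfl
      rw [hbr, hgr, one_zpow, mul_one] at hright
      have hm : (toAdd z).1 * r = 0 := by
        have := congrArg toAdd hright
        simpa [toAdd_zpow] using this
      have hm0 : (toAdd z).1 = 0 := by
        rcases mul_eq_zero.1 hm with h | h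
        · exact h
        · exact absurd h hr
      rw [hm0, zpow_zero, one_mul] at hz
      have hyn : y ^ (toAdd z).2 = 1 := by
        have h5 : (inl (y ^ (toAdd z).2) : SDP B φ) = 1 := by
          rw [map_zpow, ← hb]; exact hz
        exact inl_injective (h5.trans (map_one (inl : B →* SDP B φ)).symm)
      have hn0 : (toAdd z).2 = 0 := by
        by_contra hn
        exact htf y hy (isOfFinOrder_iff_pow_eq_one.2
          ⟨(toAdd z).2.natAbs, Int.natAbs_pos.2 hn, pow_natAbs_eq_one.2 hyn⟩)
      apply toAdd.injective
      rw [toAdd_one, Prod.ext_iff]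
      exact ⟨hm0, hn0⟩
    exact hnZ2 ⟨_, ⟨(MonoidHom.ofInjective inj).symm⟩⟩
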